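/- Under the hypotheses of the Rouché-type localization lemma, for all λ on the circle |λ − λ*| = R one has the strict inequality |(λ − iω)²ρ(λ)| < |F′(iω)|·R, where λ* = iω − F(iω)/F′(iω). -/

import Mathlib

open Complex Metric

/-- On the boundary circle `|λ - λ*| = R` the remainder dominates:
`|(λ - iω)² ρ(λ)| < |F'(iω)| · R`. -/
theorem stmt_4 (F ρ : ℂ → ℂ) (ω R₁ R M : ℝ)
    (hR₁ : 0 < R₁) (hR : 0 < R)
    (hF : AnalyticOnNhd ℂ F (closedBall (Complex.I * (ω : ℂ)) R₁))
    (hDer : deriv F (Complex.I * (ω : ℂ)) ≠ 0)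
    (hexp : ∀ z ∈ closedBall (Complex.I * (ω : ℂ)) R₁,
      F z = F (Complex.I * (ω : ℂ))
        + (z - Complex.I * (ω : ℂ)) * deriv F (Complex.I * (ω : ℂ))
        + (z - Complex.I * (ω : ℂ)) ^ 2 * ρ z)
    (hρM : ∀ z ∈ closedBall (Complex.I * (ω : ℂ)) R₁, ‖ρ z‖ ≤ M)
    (hM0 : 0 < M)
    (hM : M < (‖deriv F (Complex.I * (ω : ℂ))‖) ^ 2 /
      (4 * ‖F (Complex.I * (ω : ℂ))‖))
    (lamStar : ℂ) (b c : ℝ)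
    (hlam : lamStar = Complex.I * (ω : ℂ)
      - F (Complex.I * (ω : ℂ)) / deriv F (Complex.I * (ω : ℂ)))
    (hc : c = ‖F (Complex.I * (ω : ℂ)) / deriv F (Complex.I * (ω : ℂ))‖)
    (hb : b = Real.sqrt (‖deriv F (Complex.I * (ω : ℂ))‖ / (4 * M)))
    (hsq1 : b - Real.sqrt (b ^ 2 - c) < Real.sqrt R)
    (hsq2 : Real.sqrt R < b + Real.sqrt (b ^ 2 - c))
    (hsub : closedBall lamStar R ⊆ closedBall (Complex.I * (ω : ℂ)) R₁) :
    ∀ z : ℂ, ‖z - lamStar‖ = R →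
      ‖(z - Complex.I * (ω : ℂ)) ^ 2 * ρ z‖
        < ‖deriv F (Complex.I * (ω : ℂ))‖ * R := by
  intro z hz
  have hA0 : 0 < ‖deriv F (Complex.I * (ω : ℂ))‖ :=
    norm_pos_iff.mpr hDer
  set A := ‖deriv F (Complex.I * (ω : ℂ))‖ with hAdef
  have hc0 : 0 ≤ c := hc ▸ norm_nonneg _
  have hb0 : 0 < b := by
    rw [hb]; exact Real.sqrt_pos.mpr (by positivity)
  have hzball : z ∈ closedBall lamStar R := by
    simp [Metric.mem_closedBall, Complex.dist_eq, hz]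
  have hρ := hρM z (hsub hzball)
  have hd : ‖z - Complex.I * (ω : ℂ)‖ ≤ R + c := by
    have heq : z - Complex.I * (ω : ℂ)
        = (z - lamStar) + (lamStar - Complex.I * (ω : ℂ)) := by ring
    rw [heq]
    refine (norm_add_le _ _).trans ?_
    have h1 : ‖lamStar - Complex.I * (ω : ℂ)‖ = c := by
      rw [hlam, hc]
      have : Complex.I * (ω : ℂ)
          - F (Complex.I * (ω : ℂ)) / deriv F (Complex.I * (ω : ℂ))
          - Complex.I * (ω : ℂ)
          = -(F (Complex.I * (ω : ℂ)) / deriv F (Complex.I * (ω : ℂ))) := by ring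
      rw [this, norm_neg]
    rw [hz, h1]
  have hs : 0 < Real.sqrt (b ^ 2 - c) := by
    nlinarith [Real.sqrt_nonneg (b ^ 2 - c)]
  have hbc : 0 < b ^ 2 - c := Real.sqrt_pos.mp hs
  have hssq : Real.sqrt (b ^ 2 - c) ^ 2 = b ^ 2 - c := Real.sq_sqrt hbc.le
  have hRsq : Real.sqrt R ^ 2 = R := Real.sq_sqrt hR.le
  have h1 : (Real.sqrt R - b) ^ 2 < Real.sqrt (b ^ 2 - c) ^ 2 :=
    sq_lt_sq' (by linarith) (by linarith)
  have hkey : R + c < 2 * b * Real.sqrt R := by nlinarith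
  have hb2 : b ^ 2 * (4 * M) = A := by
    have : b ^ 2 = A / (4 * M) := by
      rw [hb]; exact Real.sq_sqrt (by positivity)
    rw [this]; field_simp
  have h2 : (R + c) ^ 2 < (2 * b * Real.sqrt R) ^ 2 :=
    pow_lt_pow_left₀ hkey (by positivity) (by norm_num)
  have h3 : (2 * b * Real.sqrt R) ^ 2 = 4 * b ^ 2 * R := by
    rw [mul_pow, mul_pow, hRsq]; ring
  have hkey2 : (R + c) ^ 2 * M < A * R := by nlinarith
  have hd0 : 0 ≤ ‖z - Complex.I * (ω : ℂ)‖ :=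
    norm_nonneg _
  rw [norm_mul, norm_pow]
  calc ‖z - Complex.I * (ω : ℂ)‖ ^ 2 * ‖ρ z‖
      ≤ ‖z - Complex.I * (ω : ℂ)‖ ^ 2 * M :=
        mul_le_mul_of_nonneg_left hρ (by positivity)
    _ ≤ (R + c) ^ 2 * M :=
        mul_le_mul_of_nonneg_right (pow_le_pow_left₀ hd0 hd 2) hM0.le
    _ < A * R := hkey2
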